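/- If a sequence of adjacent transpositions (τ_1,...,τ_s) transforming π into σ has minimum length among all such sequences, then the intermediate permutations π_i = πτ_1⋯τ_i lie on a line: for all i < j < k, π_j is between π_i and π_k. -/

import Mathlib

open Equiv Finset

/-- The adjacent transposition swapping positions `i` and `i+1` (0-indexed);
identity if out of range. -/
def adjSwap (n i : ℕ) : Equiv.Perm (Fin n) :=
  if h : i + 1 < n then Equiv.swap ⟨i, Nat.lt_of_succ_lt h⟩ ⟨i + 1, h⟩ else 1

/-- `ω` is between `π` and `σ`: on every pair `{a,b}`, `ω` agrees with `π` or with `σ`. -/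
def Between {n : ℕ} (π ω σ : Equiv.Perm (Fin n)) : Prop :=
  ∀ a b : Fin n, (π⁻¹ a < π⁻¹ b ↔ ω⁻¹ a < ω⁻¹ b) ∨ (σ⁻¹ a < σ⁻¹ b ↔ ω⁻¹ a < ω⁻¹ b)

/-- Kendall tau distance: minimum number of adjacent transpositions transforming `π` into `σ`. -/
noncomputable def kendall {n : ℕ} (π σ : Equiv.Perm (Fin n)) : ℕ :=
  sInf {s | ∃ l : List ℕ, (∀ i ∈ l, i + 1 < n) ∧
    σ = π * (l.map (adjSwap n)).prod ∧ l.length = s}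

/-- The set of inversions between `π` and `σ` (each unordered pair `{i,j}` of disagreement
is recorded as the ordered pair `(i,j)` with `i` ranked before `j` by `π`). -/
def invSet {n : ℕ} (π σ : Equiv.Perm (Fin n)) : Finset (Fin n × Fin n) :=
  Finset.univ.filter fun p => π⁻¹ p.1 < π⁻¹ p.2 ∧ σ⁻¹ p.2 < σ⁻¹ p.1

/-- Elements `j` on whose relative order with `i` the permutations `π` and `σ` disagree. -/
def invWith {n : ℕ} (π σ : Equiv.Perm (Fin n)) (i : Fin n) : Finset (Fin n) :=
  Finset.univ.filter fun j => ¬(π⁻¹ i < π⁻¹ j ↔ σ⁻¹ i < σ⁻¹ j)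

/-- Weighted Kendall distance for weight function `φ` on adjacent transpositions
(`φ h` is the weight of swapping positions `h, h+1`, 0-indexed). -/
noncomputable def wKendall {n : ℕ} (φ : ℕ → ℝ) (π σ : Equiv.Perm (Fin n)) : ℝ :=
  sInf {w | ∃ l : List ℕ, (∀ i ∈ l, i + 1 < n) ∧
    σ = π * (l.map (adjSwap n)).prod ∧ (l.map φ).sum = w}

/-- `w(k:l)`: sum of adjacent-transposition weights between positions `min k l` and `max k l - 1`. -/
def wsum (φ : ℕ → ℝ) (k l : ℕ) : ℝ := ∑ h ∈ Finset.Ico (min k l) (max k l), φ h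

/-- The generalized (weighted) Spearman footrule `D_φ`. -/
noncomputable def DKendall {n : ℕ} (φ : ℕ → ℝ) (π σ : Equiv.Perm (Fin n)) : ℝ :=
  ∑ i : Fin n, wsum φ ((π⁻¹ i : Fin n) : ℕ) ((σ⁻¹ i : Fin n) : ℕ)

/-- Weighted transposition distance with weight function `φ` on transpositions. -/
noncomputable def wTrans {n : ℕ} (φ : Fin n → Fin n → ℝ) (π σ : Equiv.Perm (Fin n)) : ℝ :=
  sInf {w | ∃ l : List (Fin n × Fin n), (∀ p ∈ l, p.1 ≠ p.2) ∧
    σ = π * (l.map fun p => Equiv.swap p.1 p.2).prod ∧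
    (l.map fun p => φ p.1 p.2).sum = w}

/-- Weight of a path (as a list of vertices) in the complete graph `K_φ`. -/
def pathWt {n : ℕ} (φ : Fin n → Fin n → ℝ) (p : List (Fin n)) : ℝ :=
  ((p.zip p.tail).map fun q => φ q.1 q.2).sum

/-- `p` is a path from `a` to `b` (consecutive vertices distinct). -/
def IsPath {n : ℕ} (p : List (Fin n)) (a b : Fin n) : Prop :=
  p.head? = some a ∧ p.getLast? = some b ∧ p.Chain' (· ≠ ·)

/-- Minimum weight of a path from `a` to `b` in `K_φ`. -/
noncomputable def minPathWt {n : ℕ} (φ : Fin n → Fin n → ℝ) (a b : Fin n) : ℝ :=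
  sInf {w | ∃ p : List (Fin n), IsPath p a b ∧ pathWt φ p = w}

/-- The footrule-type lower/upper bounding function `D_φ` for transposition weights. -/
noncomputable def DTrans {n : ℕ} (φ : Fin n → Fin n → ℝ) (π σ : Equiv.Perm (Fin n)) : ℝ :=
  ∑ i : Fin n, minPathWt φ (π⁻¹ i) (σ⁻¹ i)

variable {n : ℕ}

lemma adjSwap_eq (h : ℕ) (hh : h + 1 < n) :
    adjSwap n h = Equiv.swap ⟨h, Nat.lt_of_succ_lt hh⟩ ⟨h + 1, hh⟩ := dif_pos hh

lemma swap_adj_lt_iff (h : ℕ) (hh : h + 1 < n) (u v : Fin n)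
    (h1 : ¬(u = ⟨h, Nat.lt_of_succ_lt hh⟩ ∧ v = ⟨h + 1, hh⟩))
    (h2 : ¬(u = ⟨h + 1, hh⟩ ∧ v = ⟨h, Nat.lt_of_succ_lt hh⟩)) :
    (Equiv.swap ⟨h, Nat.lt_of_succ_lt hh⟩ ⟨h + 1, hh⟩ u <
      Equiv.swap ⟨h, Nat.lt_of_succ_lt hh⟩ ⟨h + 1, hh⟩ v ↔ u < v) := by
  simp only [not_and] at h1 h2
  simp only [Equiv.swap_apply_def, Fin.lt_def]
  rcases u with ⟨u, hu⟩; rcases v with ⟨v, hv⟩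
  simp only [Fin.ext_iff] at *
  split_ifs <;> simp_all <;> omega

lemma inv_mul_adj (ω : Equiv.Perm (Fin n)) (h : ℕ) (hh : h + 1 < n) (x : Fin n) :
    (ω * adjSwap n h)⁻¹ x =
      Equiv.swap ⟨h, Nat.lt_of_succ_lt hh⟩ ⟨h + 1, hh⟩ (ω⁻¹ x) := by
  rw [adjSwap_eq h hh, mul_inv_rev, Equiv.swap_inv, Equiv.Perm.mul_apply]

lemma lt_mul_adj_iff (ω : Equiv.Perm (Fin n)) (h : ℕ) (hh : h + 1 < n) (x y : Fin n)
    (h1 : ¬(x = ω ⟨h, Nat.lt_of_succ_lt hh⟩ ∧ y = ω ⟨h + 1, hh⟩))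
    (h2 : ¬(x = ω ⟨h + 1, hh⟩ ∧ y = ω ⟨h, Nat.lt_of_succ_lt hh⟩)) :
    ((ω * adjSwap n h)⁻¹ x < (ω * adjSwap n h)⁻¹ y ↔ ω⁻¹ x < ω⁻¹ y) := by
  rw [inv_mul_adj ω h hh, inv_mul_adj ω h hh]
  apply swap_adj_lt_iff h hh
  · rintro ⟨ha, hb⟩
    exact h1 ⟨by simpa using congrArg ω ha, by simpa using congrArg ω hb⟩
  · rintro ⟨ha, hb⟩
    exact h2 ⟨by simpa using congrArg ω ha, by simpa using congrArg ω hb⟩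

lemma inv_mul_adj_fst (ω : Equiv.Perm (Fin n)) (h : ℕ) (hh : h + 1 < n) :
    (ω * adjSwap n h)⁻¹ (ω ⟨h, Nat.lt_of_succ_lt hh⟩) = ⟨h + 1, hh⟩ := by
  rw [inv_mul_adj ω h hh]; simp

lemma inv_mul_adj_snd (ω : Equiv.Perm (Fin n)) (h : ℕ) (hh : h + 1 < n) :
    (ω * adjSwap n h)⁻¹ (ω ⟨h + 1, hh⟩) = ⟨h, Nat.lt_of_succ_lt hh⟩ := by
  rw [inv_mul_adj ω h hh]; simp

lemma pq_lt (h : ℕ) (hh : h + 1 < n) :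
    (⟨h, Nat.lt_of_succ_lt hh⟩ : Fin n) < ⟨h + 1, hh⟩ := by simp [Fin.lt_def]

lemma ab_ne (ω : Equiv.Perm (Fin n)) (h : ℕ) (hh : h + 1 < n) :
    ω ⟨h, Nat.lt_of_succ_lt hh⟩ ≠ ω ⟨h + 1, hh⟩ := by
  simp [Fin.ext_iff]

lemma mem_invSet {π σ : Equiv.Perm (Fin n)} {x y : Fin n} :
    (x, y) ∈ invSet π σ ↔ π⁻¹ x < π⁻¹ y ∧ σ⁻¹ y < σ⁻¹ x := by
  simp [invSet]

lemma invSet_mul_adj_disc (σ ω : Equiv.Perm (Fin n)) (h : ℕ) (hh : h + 1 < n)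
    (hd : σ⁻¹ (ω ⟨h + 1, hh⟩) < σ⁻¹ (ω ⟨h, Nat.lt_of_succ_lt hh⟩)) :
    invSet (ω * adjSwap n h) σ =
      (invSet ω σ).erase (ω ⟨h, Nat.lt_of_succ_lt hh⟩, ω ⟨h + 1, hh⟩) := by
  set a := ω ⟨h, Nat.lt_of_succ_lt hh⟩ with ha
  set b := ω ⟨h + 1, hh⟩ with hb
  ext ⟨x, y⟩
  rw [Finset.mem_erase, mem_invSet, mem_invSet]
  by_cases e1 : x = a ∧ y = b
  · obtain ⟨rfl, rfl⟩ := e1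
    simp only [show (ω * adjSwap n h)⁻¹ a = ⟨h + 1, hh⟩ from inv_mul_adj_fst ω h hh,
      show (ω * adjSwap n h)⁻¹ b = ⟨h, Nat.lt_of_succ_lt hh⟩ from inv_mul_adj_snd ω h hh]
    have := pq_lt h hh
    constructor
    · rintro ⟨h', -⟩; exact absurd h' (by simp [Fin.lt_def])
    · rintro ⟨hne, -⟩; exact absurd rfl hne
  · by_cases e2 : x = b ∧ y = a
    · obtain ⟨rfl, rfl⟩ := e2
      simp only [show (ω * adjSwap n h)⁻¹ a = ⟨h + 1, hh⟩ from inv_mul_adj_fst ω h hh,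
      show (ω * adjSwap n h)⁻¹ b = ⟨h, Nat.lt_of_succ_lt hh⟩ from inv_mul_adj_snd ω h hh]
      constructor
      · rintro ⟨-, h'⟩; exact absurd h' (asymm hd)
      · rintro ⟨-, h', -⟩
        rw [ha, hb] at h'
        simp only [Equiv.Perm.coe_inv, Equiv.symm_apply_apply] at h'
        exact absurd h' (by simp [Fin.lt_def])
    · rw [lt_mul_adj_iff ω h hh x y e1 e2]
      have : ¬(x = a ∧ y = b) → ((x, y) ≠ (a, b)) := by
        intro hne heq; exact hne ⟨congrArg Prod.fst heq, congrArg Prod.snd heq⟩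
      constructor
      · rintro ⟨h1, h2⟩; exact ⟨this e1, h1, h2⟩
      · rintro ⟨-, h1, h2⟩; exact ⟨h1, h2⟩

lemma invSet_mul_adj_conc (σ ω : Equiv.Perm (Fin n)) (h : ℕ) (hh : h + 1 < n)
    (hd : ¬ σ⁻¹ (ω ⟨h + 1, hh⟩) < σ⁻¹ (ω ⟨h, Nat.lt_of_succ_lt hh⟩)) :
    invSet (ω * adjSwap n h) σ =
      insert (ω ⟨h + 1, hh⟩, ω ⟨h, Nat.lt_of_succ_lt hh⟩) (invSet ω σ) := by
  set a := ω ⟨h, Nat.lt_of_succ_lt hh⟩ with ha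
  set b := ω ⟨h + 1, hh⟩ with hb
  have hab : a ≠ b := ab_ne ω h hh
  have hσ : σ⁻¹ a < σ⁻¹ b := by
    rcases lt_or_gt_of_ne (fun e => hab ((Equiv.injective σ⁻¹) e)) with h' | h'
    · exact h'
    · exact absurd h' hd
  ext ⟨x, y⟩
  rw [Finset.mem_insert, mem_invSet, mem_invSet]
  by_cases e1 : x = a ∧ y = b
  · obtain ⟨rfl, rfl⟩ := e1
    simp only [show (ω * adjSwap n h)⁻¹ a = ⟨h + 1, hh⟩ from inv_mul_adj_fst ω h hh,
      show (ω * adjSwap n h)⁻¹ b = ⟨h, Nat.lt_of_succ_lt hh⟩ from inv_mul_adj_snd ω h hh]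
    constructor
    · rintro ⟨h', -⟩; exact absurd h' (by simp [Fin.lt_def])
    · rintro (h' | ⟨-, h'⟩)
      · exact absurd (congrArg Prod.fst h') hab
      · exact absurd h' (asymm hσ)
  · by_cases e2 : x = b ∧ y = a
    · obtain ⟨rfl, rfl⟩ := e2
      simp only [show (ω * adjSwap n h)⁻¹ a = ⟨h + 1, hh⟩ from inv_mul_adj_fst ω h hh,
      show (ω * adjSwap n h)⁻¹ b = ⟨h, Nat.lt_of_succ_lt hh⟩ from inv_mul_adj_snd ω h hh]
      exact ⟨fun _ => Or.inl trivial, fun _ => ⟨pq_lt h hh, hσ⟩⟩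
    · rw [lt_mul_adj_iff ω h hh x y e1 e2]
      constructor
      · exact fun h' => Or.inr h'
      · rintro (h' | h')
        · exact absurd ⟨congrArg Prod.fst h', congrArg Prod.snd h'⟩ e2
        · exact h'

lemma card_invSet_mul_adj (σ ω : Equiv.Perm (Fin n)) (h : ℕ) (hh : h + 1 < n) :
    ((invSet (ω * adjSwap n h) σ).card = (invSet ω σ).card + 1) ∨
    ((invSet (ω * adjSwap n h) σ).card + 1 = (invSet ω σ).card ∧
      σ⁻¹ (ω ⟨h + 1, hh⟩) < σ⁻¹ (ω ⟨h, Nat.lt_of_succ_lt hh⟩)) := by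
  by_cases hd : σ⁻¹ (ω ⟨h + 1, hh⟩) < σ⁻¹ (ω ⟨h, Nat.lt_of_succ_lt hh⟩)
  · right
    refine ⟨?_, hd⟩
    rw [invSet_mul_adj_disc σ ω h hh hd]
    have hmem : (ω ⟨h, Nat.lt_of_succ_lt hh⟩, ω ⟨h + 1, hh⟩) ∈ invSet ω σ := by
      rw [mem_invSet]
      simp only [Equiv.Perm.coe_inv, Equiv.symm_apply_apply]
      exact ⟨pq_lt h hh, hd⟩
    have hpos : 0 < (invSet ω σ).card := Finset.card_pos.mpr ⟨_, hmem⟩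
    rw [Finset.card_erase_of_mem hmem]
    omega
  · left
    rw [invSet_mul_adj_conc σ ω h hh hd]
    rw [Finset.card_insert_of_notMem]
    rw [mem_invSet]
    intro ⟨h1, h2⟩
    simp only [Equiv.Perm.coe_inv, Equiv.symm_apply_apply] at h1
    exact absurd h1 (by simp [Fin.lt_def])

lemma conc_step (σ ω : Equiv.Perm (Fin n)) (h : ℕ) (hh : h + 1 < n)
    (hd : σ⁻¹ (ω ⟨h + 1, hh⟩) < σ⁻¹ (ω ⟨h, Nat.lt_of_succ_lt hh⟩))
    (a b : Fin n) (hc : (ω⁻¹ a < ω⁻¹ b ↔ σ⁻¹ a < σ⁻¹ b)) :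
    ((ω * adjSwap n h)⁻¹ a < (ω * adjSwap n h)⁻¹ b ↔ σ⁻¹ a < σ⁻¹ b) := by
  by_cases e1 : a = ω ⟨h, Nat.lt_of_succ_lt hh⟩ ∧ b = ω ⟨h + 1, hh⟩
  · obtain ⟨rfl, rfl⟩ := e1
    exfalso
    have : σ⁻¹ (ω ⟨h, Nat.lt_of_succ_lt hh⟩) < σ⁻¹ (ω ⟨h + 1, hh⟩) := by
      rw [← hc]; simpa using pq_lt h hh
    exact absurd this (asymm hd)
  · by_cases e2 : a = ω ⟨h + 1, hh⟩ ∧ b = ω ⟨h, Nat.lt_of_succ_lt hh⟩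
    · obtain ⟨rfl, rfl⟩ := e2
      exfalso
      have : ¬ σ⁻¹ (ω ⟨h + 1, hh⟩) < σ⁻¹ (ω ⟨h, Nat.lt_of_succ_lt hh⟩) := by
        rw [← hc]
        simp only [Equiv.Perm.coe_inv, Equiv.symm_apply_apply]
        simp [Fin.lt_def]
      exact this hd
    · rw [lt_mul_adj_iff ω h hh a b e1 e2]
      exact hc

lemma strictMono_perm_id (g : Equiv.Perm (Fin n)) (hg : StrictMono g) (x : Fin n) :
    g x = x := by
  have he : StrictMono.orderIsoOfSurjective (g : Fin n → Fin n) hg g.surjective =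
      OrderIso.refl (Fin n) := Subsingleton.elim _ _
  have h2 := congrFun
    (StrictMono.coe_orderIsoOfSurjective (g : Fin n → Fin n) hg g.surjective) x
  rw [he] at h2
  simpa using h2.symm

lemma eq_of_no_descent (π σ : Equiv.Perm (Fin n))
    (hnd : ∀ h : ℕ, (hh : h + 1 < n) →
      ¬ σ⁻¹ (π ⟨h + 1, hh⟩) < σ⁻¹ (π ⟨h, Nat.lt_of_succ_lt hh⟩)) :
    π = σ := by
  have hmono : StrictMono (σ⁻¹ * π : Equiv.Perm (Fin n)) := by
    cases n with
    | zero => intro a; exact absurd a.2 (by omega)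
    | succ m =>
      rw [Fin.strictMono_iff_lt_succ]
      intro i
      have hh : (i : ℕ) + 1 < m + 1 := by omega
      have hne : σ⁻¹ (π (Fin.castSucc i)) ≠ σ⁻¹ (π i.succ) := by
        intro e
        have h3 := congrArg Fin.val ((Equiv.injective π) ((Equiv.injective σ⁻¹) e))
        simp only [Fin.coe_castSucc, Fin.val_succ] at h3
        omega
      have h1 : Fin.castSucc i = (⟨(i : ℕ), Nat.lt_of_succ_lt hh⟩ : Fin (m + 1)) := rfl
      have h2 : i.succ = (⟨(i : ℕ) + 1, hh⟩ : Fin (m + 1)) := rfl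
      have := hnd (i : ℕ) hh
      rw [← h1, ← h2] at this
      rcases lt_or_gt_of_ne hne with h' | h'
      · exact h'
      · exact absurd h' this
  have hid : ∀ x, (σ⁻¹ * π) x = x := strictMono_perm_id _ hmono
  apply Equiv.ext
  intro x
  have := hid x
  simp only [Equiv.Perm.mul_apply] at this
  calc π x = σ (σ⁻¹ (π x)) := by simp
    _ = σ x := by rw [this]

lemma exists_sorting (σ : Equiv.Perm (Fin n)) :
    ∀ (c : ℕ) (π : Equiv.Perm (Fin n)), (invSet π σ).card = c →
      ∃ l : List ℕ, (∀ i ∈ l, i + 1 < n) ∧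
        σ = π * (l.map (adjSwap n)).prod ∧ l.length = c := by
  intro c
  induction c using Nat.strong_induction_on with
  | _ c ih =>
    intro π hc
    by_cases hd : ∃ h : ℕ, ∃ hh : h + 1 < n,
        σ⁻¹ (π ⟨h + 1, hh⟩) < σ⁻¹ (π ⟨h, Nat.lt_of_succ_lt hh⟩)
    · obtain ⟨h, hh, hdesc⟩ := hd
      have hmem : (π ⟨h, Nat.lt_of_succ_lt hh⟩, π ⟨h + 1, hh⟩) ∈ invSet π σ := by
        rw [mem_invSet]
        simp only [Equiv.Perm.coe_inv, Equiv.symm_apply_apply]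
        exact ⟨pq_lt h hh, hdesc⟩
      have hpos : 0 < c := hc ▸ Finset.card_pos.mpr ⟨_, hmem⟩
      have hc' : (invSet (π * adjSwap n h) σ).card = c - 1 := by
        rw [invSet_mul_adj_disc σ π h hh hdesc, Finset.card_erase_of_mem hmem, hc]
      obtain ⟨l', hl1, hl2, hl3⟩ := ih (c - 1) (by omega) (π * adjSwap n h) hc'
      refine ⟨h :: l', ?_, ?_, ?_⟩
      · intro i hi
        rcases List.mem_cons.mp hi with rfl | hi
        · exact hh
        · exact hl1 i hi
      · rw [hl2]
        simp [mul_assoc]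
      · simp only [List.length_cons, hl3]
        omega
    · have heq : π = σ := eq_of_no_descent π σ (fun h hh hlt => hd ⟨h, hh, hlt⟩)
      have hempty : invSet π σ = ∅ := by
        subst heq
        ext ⟨x, y⟩
        rw [mem_invSet]
        simp only [Finset.notMem_empty, iff_false]
        rintro ⟨h1, h2⟩
        exact absurd h2 (asymm h1)
      rw [hempty] at hc
      simp only [Finset.card_empty] at hc
      refine ⟨[], by simp, by simp [heq], by simp [← hc]⟩

lemma invSet_self (σ : Equiv.Perm (Fin n)) : invSet σ σ = ∅ := by
  ext ⟨x, y⟩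
  rw [mem_invSet]
  simp only [Finset.notMem_empty, iff_false]
  rintro ⟨h1, h2⟩
  exact absurd h2 (asymm h1)


theorem stmt5 (n : ℕ) (π σ : Equiv.Perm (Fin n)) (l : List ℕ)
    (hvalid : ∀ i ∈ l, i + 1 < n)
    (htrans : σ = π * (l.map (adjSwap n)).prod)
    (hmin : l.length = kendall π σ)
    (i j k : ℕ) (hij : i < j) (hjk : j < k) (hk : k ≤ l.length) :
    Between (π * ((l.take i).map (adjSwap n)).prod)
            (π * ((l.take j).map (adjSwap n)).prod)
            (π * ((l.take k).map (adjSwap n)).prod) := by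
  classical
  set s := l.length with hs
  set P : ℕ → Equiv.Perm (Fin n) := fun m => π * ((l.take m).map (adjSwap n)).prod with hP
  have hP0 : P 0 = π := by simp [hP]
  have hPs : P s = σ := by
    simp only [hP, hs]
    rw [List.take_length]
    exact htrans.symm
  have hvm : ∀ m (hm : m < s), l.get ⟨m, hm⟩ + 1 < n :=
    fun m hm => hvalid _ (l.get_mem _)
  have hstep : ∀ m (hm : m < s), P (m + 1) = P m * adjSwap n (l.get ⟨m, hm⟩) := by
    intro m hm
    simp only [hP]
    rw [List.take_succ, List.getElem?_eq_getElem hm]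
    simp only [Option.toList_some, List.map_append, List.prod_append, List.map_cons,
      List.map_nil, List.prod_cons, List.prod_nil, mul_one, mul_assoc, List.get_eq_getElem]
  set N : ℕ → ℕ := fun m => (invSet (P m) σ).card with hN
  have hNs : N s = 0 := by simp [hN, hPs, invSet_self]
  have h0 : s ≤ N 0 := by
    obtain ⟨l', hl1, hl2, hl3⟩ := exists_sorting σ ((invSet π σ).card) π rfl
    have h1 : kendall π σ ≤ (invSet π σ).card := Nat.sInf_le ⟨l', hl1, hl2, hl3⟩
    have h2 : N 0 = (invSet π σ).card := by simp [hN, hP0]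
    omega
  have hpm : ∀ m (hm : m < s),
      (N (m + 1) = N m + 1) ∨
      (N (m + 1) + 1 = N m ∧
        σ⁻¹ (P m ⟨l.get ⟨m, hm⟩ + 1, hvm m hm⟩) <
          σ⁻¹ (P m ⟨l.get ⟨m, hm⟩, Nat.lt_of_succ_lt (hvm m hm)⟩)) := by
    intro m hm
    have := card_invSet_mul_adj σ (P m) (l.get ⟨m, hm⟩) (hvm m hm)
    rw [← hstep m hm] at this
    exact this
  have hub : ∀ d m, m + d = s → N m ≤ d := by
    intro d
    induction d with
    | zero =>
      intro m hm
      have hms : m = s := by omega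
      rw [hms, hNs]
    | succ d ihd =>
      intro m hm
      by_cases hms : m < s
      · have h1 := hpm m hms
        have h2 := ihd (m + 1) (by omega)
        omega
      · omega
  have hlb : ∀ m, m ≤ s → s ≤ N m + m := by
    intro m
    induction m with
    | zero => intro _; omega
    | succ m ihm =>
      intro hm
      have h1 := ihm (by omega)
      have h2 := hpm m (by omega)
      omega
  have hdisc : ∀ m (hm : m < s),
      σ⁻¹ (P m ⟨l.get ⟨m, hm⟩ + 1, hvm m hm⟩) <
        σ⁻¹ (P m ⟨l.get ⟨m, hm⟩, Nat.lt_of_succ_lt (hvm m hm)⟩) := by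
    intro m hm
    have h1 := hub (s - m) m (by omega)
    have h2 := hub (s - (m + 1)) (m + 1) (by omega)
    have h3 := hlb m (by omega)
    have h4 := hlb (m + 1) (by omega)
    rcases hpm m hm with h5 | ⟨-, h5⟩
    · omega
    · exact h5
  have hconc : ∀ m (hm : m < s) (a b : Fin n),
      ((P m)⁻¹ a < (P m)⁻¹ b ↔ σ⁻¹ a < σ⁻¹ b) →
      ((P (m + 1))⁻¹ a < (P (m + 1))⁻¹ b ↔ σ⁻¹ a < σ⁻¹ b) := by
    intro m hm a b hc
    rw [hstep m hm]
    exact conc_step σ (P m) (l.get ⟨m, hm⟩) (hvm m hm) (hdisc m hm) a b hc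
  have hconc' : ∀ (a b : Fin n) m m', m ≤ m' → m' ≤ s →
      ((P m)⁻¹ a < (P m)⁻¹ b ↔ σ⁻¹ a < σ⁻¹ b) →
      ((P m')⁻¹ a < (P m')⁻¹ b ↔ σ⁻¹ a < σ⁻¹ b) := by
    intro a b m m' hmm'
    induction m' with
    | zero => intro _ hc; interval_cases m; exact hc
    | succ m' ihm =>
      intro hm's hc
      by_cases he : m = m' + 1
      · subst he; exact hc
      · exact hconc m' (by omega) a b (ihm (by omega) (by omega) hc)
  intro a b
  by_cases hcj : ((P j)⁻¹ a < (P j)⁻¹ b ↔ σ⁻¹ a < σ⁻¹ b)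
  · right
    have hck := hconc' a b j k hjk.le hk hcj
    exact hck.trans hcj.symm
  · left
    have hci : ¬((P i)⁻¹ a < (P i)⁻¹ b ↔ σ⁻¹ a < σ⁻¹ b) :=
      fun hc => hcj (hconc' a b i j hij.le (hjk.le.trans hk) hc)
    tauto
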